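/- Let n ∈ ℕ, let C : ℝⁿ → ℝ satisfy 0 ≤ C(x) ≤ 1 for all x, and suppose the support {x : C(x) > 0} is bounded. Let f : ℝⁿ → ℝ be continuous, and define g : ℝ → ℝ by g(y) = sSup ({C(x) : f(x) = y} ∪ {0}). Then for every α ∈ [0,1), closure {y ∈ ℝ : g(y) > α} = f '' (closure {x ∈ ℝⁿ : C(x) > α}). -/

import Mathlib

/-- Lemma 2: the α-level of the extension of a possibility distribution `C` with
bounded support along a continuous `f` equals the image under `f` of the α-level of `C`. -/
theorem level_extension_eq_image_level (n : ℕ) (C : (Fin n → ℝ) → ℝ)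
    (hC : ∀ x, 0 ≤ C x ∧ C x ≤ 1)
    (hsupp : Bornology.IsBounded {x : Fin n → ℝ | 0 < C x})
    (f : (Fin n → ℝ) → ℝ) (hf : Continuous f)
    (g : ℝ → ℝ)
    (hg : ∀ y, g y = sSup ({t : ℝ | ∃ x, f x = y ∧ C x = t} ∪ {0}))
    (α : ℝ) (hα : α ∈ Set.Ico (0 : ℝ) 1) :
    closure {y : ℝ | α < g y} = f '' closure {x : Fin n → ℝ | α < C x} := by
  obtain ⟨hα0, hα1⟩ := hα
  set S : Set (Fin n → ℝ) := {x | α < C x}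
  have hbdd : ∀ y, BddAbove ({t : ℝ | ∃ x, f x = y ∧ C x = t} ∪ {0}) := by
    intro y
    refine ⟨1, ?_⟩
    rintro t (⟨x, -, rfl⟩ | ht)
    · exact (hC x).2
    · simp only [Set.mem_singleton_iff] at ht; simp [ht]
  have hne : ∀ y, ({t : ℝ | ∃ x, f x = y ∧ C x = t} ∪ {0} : Set ℝ).Nonempty := by
    intro y; exact ⟨0, Or.inr rfl⟩
  have hset : {y : ℝ | α < g y} = f '' S := by
    ext y
    simp only [Set.mem_setOf_eq, hg, Set.mem_image]
    constructor
    · intro h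
      obtain ⟨t, ht, hαt⟩ := (lt_csSup_iff (hbdd y) (hne y)).mp h
      rcases ht with ⟨x, hfx, rfl⟩ | ht
      · exact ⟨x, hαt, hfx⟩
      · simp only [Set.mem_singleton_iff] at ht
        exact absurd (ht ▸ hαt) (not_lt.mpr hα0)
    · rintro ⟨x, hx, rfl⟩
      exact lt_of_lt_of_le hx (le_csSup (hbdd _) (Or.inl ⟨x, rfl, rfl⟩))
  rw [hset]
  have hSsub : S ⊆ {x : Fin n → ℝ | 0 < C x} := fun x hx => lt_of_le_of_lt hα0 hx
  have hK : IsCompact (closure S) := (hsupp.subset hSsub).isCompact_closure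
  have hclosed : IsClosed (f '' closure S) := (hK.image hf).isClosed
  apply le_antisymm
  · exact closure_minimal (Set.image_mono (f := f) subset_closure) hclosed
  · exact image_closure_subset_closure_image hf
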